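/- arXiv:1912.06405 — 4 statements merged into one kernel-verified Lean document; each statement's English description precedes it below -/
import Mathlib

section
/- For every real ν ≥ 1/2 and every y > 0, the inequality y·∫_0^∞ cosh(t)·exp(−y·cosh t)·cosh(νt) dt ≤ (ν + y)·∫_0^∞ exp(−y·cosh t)·cosh(νt) dt holds; equivalently, |y·K_ν′(y)| ≤ ν·K_ν(y) + y·K_ν(y), where K_ν′(y) = −∫_0^∞ cosh(t)·exp(−y·cosh t)·cosh(νt) dt is the derivative of K_ν. -/
open MeasureTheory Real Set

/-- The modified Bessel function of the second kind, via its integral representation. -/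
noncomputable def besselK (ν y : ℝ) : ℝ :=
  ∫ t in Ioi (0:ℝ), Real.exp (-y * Real.cosh t) * Real.cosh (ν * t)

/-- The derivative `K_ν'(y) = -∫_0^∞ cosh t · exp(-y cosh t) · cosh(ν t) dt`. -/
noncomputable def besselK' (ν y : ℝ) : ℝ :=
  -∫ t in Ioi (0:ℝ), Real.cosh t * Real.exp (-y * Real.cosh t) * Real.cosh (ν * t)

lemma sq_div_eight_le_cosh {t : ℝ} (ht : 0 ≤ t) : t ^ 2 / 8 ≤ Real.cosh t := by
  have h1 : 1 + t / 2 ≤ Real.exp (t / 2) := by linarith [Real.add_one_le_exp (t / 2)]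
  have h2 : Real.exp t = Real.exp (t / 2) * Real.exp (t / 2) := by
    rw [← Real.exp_add]; ring_nf
  have h3 : (1 + t / 2) * (1 + t / 2) ≤ Real.exp t := by
    rw [h2]
    have := (Real.add_one_le_exp (t / 2))
    nlinarith [Real.exp_pos (t / 2)]
  have h4 : 0 < Real.exp (-t) := Real.exp_pos _
  rw [Real.cosh_eq]
  nlinarith

lemma key_bound {y : ℝ} (a : ℝ) (hy : 0 < y) {t : ℝ} (ht : 0 ≤ t) :
    Real.exp (a * t) * Real.exp (-y * Real.cosh t)
      ≤ Real.exp (2 * (a + 1) ^ 2 / y) * Real.exp (-1 * t) := by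
  rw [← Real.exp_add, ← Real.exp_add, Real.exp_le_exp]
  have h := sq_div_eight_le_cosh ht
  have h2 : 0 ≤ (y * t - 4 * (a + 1)) ^ 2 := sq_nonneg _
  have h3 : y * (t ^ 2 / 8) ≤ y * Real.cosh t := by nlinarith
  rw [← mul_le_mul_iff_right₀ hy]
  have h4 := mul_le_mul_of_nonneg_left h3 hy.le
  have hC : y * (2 * (a + 1) ^ 2 / y) = 2 * (a + 1) ^ 2 := by field_simp
  nlinarith [sq_nonneg (y * t - 4 * (a + 1))]

lemma aux_int {y : ℝ} (a : ℝ) (hy : 0 < y) {f : ℝ → ℝ} (hf : Continuous f)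
    (hb : ∀ t ∈ Ioi (0:ℝ), |f t| ≤ Real.exp (a * t) * Real.exp (-y * Real.cosh t)) :
    IntegrableOn f (Ioi (0:ℝ)) := by
  have hg : IntegrableOn (fun t => Real.exp (2 * (a + 1) ^ 2 / y) * Real.exp (-1 * t))
      (Ioi (0:ℝ)) := (exp_neg_integrableOn_Ioi 0 one_pos).const_mul _
  refine Integrable.mono' hg hf.aestronglyMeasurable.restrict ?_
  filter_upwards [ae_restrict_mem measurableSet_Ioi] with t ht
  exact (hb t ht).trans (key_bound a hy (le_of_lt ht))

lemma cosh_le_exp_of_nonneg {x : ℝ} (hx : 0 ≤ x) : Real.cosh x ≤ Real.exp x := by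
  rw [Real.cosh_eq]
  have : Real.exp (-x) ≤ Real.exp x := Real.exp_le_exp.2 (by linarith)
  linarith

/-- For `ν ≥ 1/2` and `y > 0`:
`y ∫_0^∞ cosh t e^{-y cosh t} cosh(νt) dt ≤ (ν + y) ∫_0^∞ e^{-y cosh t} cosh(νt) dt`,
equivalently `|y K_ν'(y)| ≤ ν K_ν(y) + y K_ν(y)`. -/
theorem abs_mul_besselK_deriv_le (ν y : ℝ) (hν : 1/2 ≤ ν) (hy : 0 < y) :
    y * ∫ t in Ioi (0:ℝ), Real.cosh t * Real.exp (-y * Real.cosh t) * Real.cosh (ν * t)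
      ≤ (ν + y) * ∫ t in Ioi (0:ℝ), Real.exp (-y * Real.cosh t) * Real.cosh (ν * t) ∧
    |y * besselK' ν y| ≤ ν * besselK ν y + y * besselK ν y := by
  have hν0 : 0 < ν := by linarith
  -- integrability of the three integrands
  have cont_exp : Continuous fun t : ℝ => Real.exp (-y * Real.cosh t) :=
    Real.continuous_exp.comp (continuous_const.mul Real.continuous_cosh)
  have cont_coshnu : Continuous fun t : ℝ => Real.cosh (ν * t) :=
    Real.continuous_cosh.comp (continuous_const.mul continuous_id)
  have cont_sinhnu : Continuous fun t : ℝ => Real.sinh (ν * t) :=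
    Real.continuous_sinh.comp (continuous_const.mul continuous_id)
  have int1 : IntegrableOn (fun t => Real.exp (-y * Real.cosh t) * Real.cosh (ν * t))
      (Ioi (0:ℝ)) := by
    refine aux_int ν hy (cont_exp.mul cont_coshnu) ?_
    intro t ht
    have ht' : (0:ℝ) < t := ht
    have h1 : Real.cosh (ν * t) ≤ Real.exp (ν * t) :=
      cosh_le_exp_of_nonneg (by positivity)
    rw [abs_of_nonneg (by positivity)]
    rw [mul_comm]
    exact mul_le_mul_of_nonneg_right h1 (Real.exp_pos _).le
  have int2 : IntegrableOn
      (fun t => Real.cosh t * Real.exp (-y * Real.cosh t) * Real.cosh (ν * t))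
      (Ioi (0:ℝ)) := by
    refine aux_int (ν + 1) hy ((Real.continuous_cosh.mul cont_exp).mul cont_coshnu) ?_
    intro t ht
    have ht' : (0:ℝ) < t := ht
    rw [abs_of_nonneg (by positivity)]
    have h1 : Real.cosh (ν * t) ≤ Real.exp (ν * t) :=
      cosh_le_exp_of_nonneg (by positivity)
    have h2 : Real.cosh t ≤ Real.exp t := cosh_le_exp_of_nonneg ht'.le
    have h3 : Real.exp ((ν + 1) * t) = Real.exp t * Real.exp (ν * t) := by
      rw [← Real.exp_add]; ring_nf
    rw [h3]
    calc Real.cosh t * Real.exp (-y * Real.cosh t) * Real.cosh (ν * t)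
        ≤ Real.exp t * Real.exp (-y * Real.cosh t) * Real.exp (ν * t) := by
          have e1 : (0:ℝ) < Real.exp (-y * Real.cosh t) := Real.exp_pos _
          have c2 : (0:ℝ) < Real.cosh (ν * t) := Real.cosh_pos (ν * t)
          have h4 : Real.cosh t * Real.cosh (ν * t) ≤ Real.exp t * Real.exp (ν * t) :=
            mul_le_mul h2 h1 c2.le (Real.exp_pos t).le
          nlinarith [mul_le_mul_of_nonneg_right h4 e1.le]
      _ = Real.exp t * Real.exp (ν * t) * Real.exp (-y * Real.cosh t) := by ring
  have int3 : IntegrableOn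
      (fun t => Real.sinh t * (Real.exp (-y * Real.cosh t) * Real.sinh (ν * t)))
      (Ioi (0:ℝ)) := by
    refine aux_int (ν + 1) hy (Real.continuous_sinh.mul (cont_exp.mul cont_sinhnu)) ?_
    intro t ht
    have ht' : (0:ℝ) < t := ht
    have s1 : 0 ≤ Real.sinh t := Real.sinh_nonneg_iff.2 ht'.le
    have s2 : 0 ≤ Real.sinh (ν * t) := Real.sinh_nonneg_iff.2 (by positivity)
    rw [abs_of_nonneg (by positivity)]
    have h1 : Real.sinh (ν * t) ≤ Real.exp (ν * t) :=
      (Real.sinh_lt_cosh _).le.trans (cosh_le_exp_of_nonneg (by positivity))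
    have h2 : Real.sinh t ≤ Real.exp t :=
      (Real.sinh_lt_cosh _).le.trans (cosh_le_exp_of_nonneg ht'.le)
    have h3 : Real.exp ((ν + 1) * t) = Real.exp t * Real.exp (ν * t) := by
      rw [← Real.exp_add]; ring_nf
    rw [h3]
    have e1 : (0:ℝ) < Real.exp (-y * Real.cosh t) := Real.exp_pos _
    have h4 : Real.sinh t * Real.sinh (ν * t) ≤ Real.exp t * Real.exp (ν * t) :=
      mul_le_mul h2 h1 s2 (Real.exp_pos t).le
    nlinarith [mul_le_mul_of_nonneg_right h4 e1.le]
  set I1 := ∫ t in Ioi (0:ℝ), Real.exp (-y * Real.cosh t) * Real.cosh (ν * t) with hI1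
  set I2 := ∫ t in Ioi (0:ℝ),
      Real.cosh t * Real.exp (-y * Real.cosh t) * Real.cosh (ν * t) with hI2
  set I3 := ∫ t in Ioi (0:ℝ),
      Real.sinh t * (Real.exp (-y * Real.cosh t) * Real.sinh (ν * t)) with hI3
  -- integration by parts identity: ν I1 = y I3
  have key : ν * I1 = y * I3 := by
    set F : ℝ → ℝ := fun t => Real.exp (-y * Real.cosh t) * Real.sinh (ν * t) with hF
    set F' : ℝ → ℝ := fun t =>
      (-y) * (Real.sinh t * (Real.exp (-y * Real.cosh t) * Real.sinh (ν * t)))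
        + ν * (Real.exp (-y * Real.cosh t) * Real.cosh (ν * t)) with hF'
    have hderiv : ∀ t ∈ Ioi (0:ℝ), HasDerivAt F (F' t) t := by
      intro t _
      have h1 : HasDerivAt (fun t : ℝ => -y * Real.cosh t) (-y * Real.sinh t) t :=
        (Real.hasDerivAt_cosh t).const_mul (-y)
      have h2 : HasDerivAt (fun t : ℝ => Real.exp (-y * Real.cosh t))
          (Real.exp (-y * Real.cosh t) * (-y * Real.sinh t)) t := h1.exp
      have h3 : HasDerivAt (fun t : ℝ => Real.sinh (ν * t))
          (Real.cosh (ν * t) * (ν * 1)) t :=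
        (Real.hasDerivAt_sinh (ν * t)).comp t ((hasDerivAt_id t).const_mul ν)
      have := h2.mul h3
      refine HasDerivAt.congr_deriv this ?_
      simp only [hF']
      ring
    have hFint : IntegrableOn F' (Ioi (0:ℝ)) := by
      exact (int3.const_mul (-y)).add (int1.const_mul ν)
    have htend : Filter.Tendsto F Filter.atTop (nhds 0) := by
      have hg : Filter.Tendsto
          (fun t : ℝ => Real.exp (2 * (ν + 1) ^ 2 / y) * Real.exp (-1 * t))
          Filter.atTop (nhds 0) := by
        have h0 : Filter.Tendsto (fun t : ℝ => Real.exp (-1 * t)) Filter.atTop (nhds 0) := by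
          have := Real.tendsto_exp_neg_atTop_nhds_zero
          refine this.congr fun x => by ring_nf
        simpa using h0.const_mul (Real.exp (2 * (ν + 1) ^ 2 / y))
      refine squeeze_zero' ?_ ?_ hg
      · filter_upwards [Filter.eventually_ge_atTop (0:ℝ)] with t ht
        have : 0 ≤ Real.sinh (ν * t) := Real.sinh_nonneg_iff.2 (by positivity)
        positivity
      · filter_upwards [Filter.eventually_ge_atTop (0:ℝ)] with t ht
        have h1 : Real.sinh (ν * t) ≤ Real.exp (ν * t) :=
          (Real.sinh_lt_cosh _).le.trans (cosh_le_exp_of_nonneg (by positivity))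
        have e1 : (0:ℝ) < Real.exp (-y * Real.cosh t) := Real.exp_pos _
        calc F t ≤ Real.exp (-y * Real.cosh t) * Real.exp (ν * t) :=
              mul_le_mul_of_nonneg_left h1 e1.le
          _ = Real.exp (ν * t) * Real.exp (-y * Real.cosh t) := by ring
          _ ≤ _ := key_bound ν hy ht
    have hcont : ContinuousWithinAt F (Ici (0:ℝ)) 0 := by
      have : Continuous F := cont_exp.mul cont_sinhnu
      exact this.continuousWithinAt
    have := integral_Ioi_of_hasDerivAt_of_tendsto hcont hderiv hFint htend
    have hF0 : F 0 = 0 := by simp [hF]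
    rw [hF0, sub_zero] at this
    have hsplit : (∫ t in Ioi (0:ℝ), F' t) = -y * I3 + ν * I1 := by
      rw [hF']
      rw [integral_add (int3.const_mul (-y)) (int1.const_mul ν),
        integral_const_mul, integral_const_mul]
    rw [hsplit] at this
    linarith
  -- pointwise inequality and integral monotonicity: I2 ≤ I3 + I1
  have hmono : I2 ≤ I3 + I1 := by
    rw [hI2, hI3, hI1, ← integral_add int3 int1]
    refine setIntegral_mono_on int2 (int3.add int1) measurableSet_Ioi ?_
    intro t ht
    have ht' : (0:ℝ) < t := ht
    have habs : |ν * t - t| ≤ |ν * t| := by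
      rw [abs_of_nonneg (by positivity : (0:ℝ) ≤ ν * t)]
      rw [abs_le]
      constructor <;> nlinarith
    have hc : Real.cosh (ν * t - t) ≤ Real.cosh (ν * t) := Real.cosh_le_cosh.2 habs
    have hsub : Real.cosh (ν * t - t)
        = Real.cosh (ν * t) * Real.cosh t - Real.sinh (ν * t) * Real.sinh t :=
      Real.cosh_sub (ν * t) t
    have e1 : (0:ℝ) < Real.exp (-y * Real.cosh t) := Real.exp_pos _
    have goal : Real.cosh t * Real.cosh (ν * t)
        ≤ Real.sinh t * Real.sinh (ν * t) + Real.cosh (ν * t) := by nlinarith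
    nlinarith [mul_le_mul_of_nonneg_left goal e1.le]
  have hI2nonneg : 0 ≤ I2 := by
    refine setIntegral_nonneg measurableSet_Ioi ?_
    intro t _
    positivity
  have main : y * I2 ≤ (ν + y) * I1 := by
    have : y * I2 ≤ y * (I3 + I1) := mul_le_mul_of_nonneg_left hmono hy.le
    calc y * I2 ≤ y * (I3 + I1) := this
      _ = y * I3 + y * I1 := by ring
      _ = ν * I1 + y * I1 := by rw [← key]
      _ = (ν + y) * I1 := by ring
  refine ⟨main, ?_⟩
  have hb : besselK ν y = I1 := rfl
  have hb' : besselK' ν y = -I2 := rfl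
  rw [hb, hb', mul_neg, abs_neg, abs_of_nonneg (mul_nonneg hy.le hI2nonneg)]
  linarith
end

section
/- As s → 0⁺, the quantity K_0(s) + log s = ∫_0^∞ exp(−s·cosh t) dt + log s converges to log 2 − γ, where γ is the Euler–Mascheroni constant; that is, K_0(s) = −log s + log 2 − γ + o(1) as s → 0⁺. -/
open MeasureTheory Real Set Filter Topology

lemma gammaInt : ∫ x in Ioi (0:ℝ), Real.log x * Real.exp (-x) = -Real.eulerMascheroniConstant := by
  have hC : HasDerivAt Complex.Gamma
      (∫ t : ℝ in Ioi 0, (t:ℂ) ^ ((1:ℂ) - 1) * (Real.log t * Real.exp (-t))) 1 := by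
    refine (Complex.hasDerivAt_GammaIntegral (by norm_num)).congr_of_eventuallyEq ?_
    filter_upwards [(isOpen_lt continuous_const Complex.continuous_re).mem_nhds
      (by norm_num : (0:ℝ) < (1:ℂ).re)] with z hz
    exact Complex.Gamma_eq_integral hz
  have hval : (∫ t : ℝ in Ioi 0, (t:ℂ) ^ ((1:ℂ) - 1) * (Real.log t * Real.exp (-t)))
      = ((∫ t : ℝ in Ioi 0, Real.log t * Real.exp (-t) : ℝ) : ℂ) := by
    have : ((∫ t : ℝ in Ioi 0, Real.log t * Real.exp (-t) : ℝ) : ℂ)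
        = ∫ t : ℝ in Ioi 0, ((Real.log t * Real.exp (-t) : ℝ) : ℂ) :=
      (integral_ofReal (𝕜 := ℂ)).symm
    rw [this]
    refine setIntegral_congr_fun measurableSet_Ioi fun t ht => ?_
    rw [sub_self, Complex.cpow_zero, one_mul]
    push_cast
    ring
  rw [hval] at hC
  have hR : HasDerivAt Real.Gamma (∫ t : ℝ in Ioi 0, Real.log t * Real.exp (-t)) 1 := by
    have := HasDerivAt.real_of_complex (e := Complex.Gamma) (z := 1) hC
    simpa [Complex.Gamma_ofReal] using this
  have := Real.hasDerivAt_Gamma_one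
  have h2 := hR.unique this
  linarith [h2]

lemma tendsto_Ioc_left {f : ℝ → ℝ} (hf : IntegrableOn f (Ioc 0 1)) :
    Tendsto (fun a => ∫ x in Ioc a 1, f x) (𝓝[>] (0:ℝ)) (𝓝 (∫ x in Ioc 0 1, f x)) := by
  have hf' : IntegrableOn f (Icc 0 1) := by
    rwa [integrableOn_Icc_iff_integrableOn_Ioc]
  have hcont := intervalIntegral.continuousOn_primitive (f := f) (μ := volume) hf'
  have h0 : Tendsto (fun a => ∫ x in Ioc 0 a, f x) (𝓝[>] (0:ℝ)) (𝓝 0) := by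
    have := (hcont 0 (left_mem_Icc.2 zero_le_one)).tendsto
    simp only [Ioc_self, Measure.restrict_empty, integral_zero_measure] at this
    refine this.mono_left ?_
    rw [← nhdsWithin_Ioc_eq_nhdsGT (zero_lt_one (α := ℝ))]
    exact nhdsWithin_mono _ Ioc_subset_Icc_self
  have heq : ∀ᶠ a in 𝓝[>] (0:ℝ), ∫ x in Ioc a 1, f x
      = (∫ x in Ioc 0 1, f x) - ∫ x in Ioc 0 a, f x := by
    filter_upwards [Ioo_mem_nhdsGT (zero_lt_one (α := ℝ))] with a ha
    have hsplit : (∫ x in Ioc 0 a, f x) + ∫ x in Ioc a 1, f x = ∫ x in Ioc 0 1, f x := by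
      rw [← setIntegral_union (Ioc_disjoint_Ioc_of_le le_rfl) measurableSet_Ioc
        (hf.mono (Ioc_subset_Ioc le_rfl ha.2.le) le_rfl)
        (hf.mono (Ioc_subset_Ioc ha.1.le le_rfl) le_rfl),
        Ioc_union_Ioc_eq_Ioc ha.1.le ha.2.le]
    linarith
  rw [show (∫ x in Ioc 0 1, f x) = (∫ x in Ioc 0 1, f x) - 0 by ring]
  exact Tendsto.congr' (heq.mono fun a h => h.symm) (tendsto_const_nhds.sub h0)

lemma intOn_exp_div {a : ℝ} (ha : 0 < a) :
    IntegrableOn (fun x => Real.exp (-x) / x) (Ioi a) := by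
  have h1 : IntegrableOn (fun x => Real.exp (-(1:ℝ) * x) * a⁻¹) (Ioi a) :=
    (exp_neg_integrableOn_Ioi a one_pos).mul_const _
  refine h1.mono' ?_ ?_
  · exact (ContinuousOn.div (Real.continuous_exp.comp continuous_neg).continuousOn
      continuousOn_id (fun x hx => (ha.trans hx).ne')).aestronglyMeasurable measurableSet_Ioi
  · filter_upwards [ae_restrict_mem measurableSet_Ioi] with x hx
    have hx0 : 0 < x := ha.trans hx
    rw [norm_div, norm_of_nonneg (Real.exp_pos _).le, norm_of_nonneg hx0.le, div_eq_mul_inv]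
    rw [neg_one_mul]
    exact mul_le_mul_of_nonneg_left (inv_anti₀ ha hx.le) (Real.exp_pos _).le

lemma intOn_exp_sub_div {a c : ℝ} (ha : 0 < a) (hc : 0 ≤ c) :
    IntegrableOn (fun x => Real.exp (-x - c / x) / x) (Ioi a) := by
  refine (intOn_exp_div ha).mono' ?_ ?_
  · refine (ContinuousOn.div ?_ continuousOn_id (fun x hx => (ha.trans hx).ne')).aestronglyMeasurable
      measurableSet_Ioi
    exact (Real.continuous_exp.comp_continuousOn
      (continuousOn_id.neg.sub ((continuousOn_const.div continuousOn_id
        (fun x hx => (ha.trans hx).ne')))))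
  · filter_upwards [ae_restrict_mem measurableSet_Ioi] with x hx
    have hx0 : 0 < x := ha.trans hx
    rw [norm_div, norm_of_nonneg (Real.exp_pos _).le, norm_of_nonneg hx0.le]
    gcongr
    nlinarith [div_nonneg hc hx0.le]

lemma intOn_A : IntegrableOn (fun x => (Real.exp (-x) - 1) / x) (Ioc (0:ℝ) 1) := by
  refine Measure.integrableOn_of_bounded (M := 1) (by simp) ?_ ?_
  · refine (Measurable.aestronglyMeasurable ?_)
    exact ((Real.measurable_exp.comp measurable_neg).sub measurable_const).div measurable_id
  · filter_upwards [ae_restrict_mem measurableSet_Ioc] with x hx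
    rw [norm_div, norm_of_nonneg hx.1.le, div_le_one hx.1, Real.norm_eq_abs]
    rw [abs_of_nonpos (by simp [Real.exp_le_one_iff.2 (by linarith [hx.1] : -x ≤ 0)] : Real.exp (-x) - 1 ≤ 0)]
    nlinarith [Real.add_one_le_exp (-x)]

lemma neg_log_le {x : ℝ} (hx : 0 < x) : -Real.log x ≤ 2 * x ^ (-(1:ℝ)/2) := by
  have h1 : Real.log (x ^ (-(1:ℝ)/2)) ≤ x ^ (-(1:ℝ)/2) - 1 :=
    Real.log_le_sub_one_of_pos (Real.rpow_pos_of_pos hx _)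
  rw [Real.log_rpow hx] at h1
  nlinarith [Real.rpow_pos_of_pos hx (-(1:ℝ)/2)]

lemma intOn_B : IntegrableOn (fun x => Real.exp (-x) * Real.log x) (Ioc (0:ℝ) 1) := by
  have hmaj : IntegrableOn (fun x => 2 * x ^ (-(1:ℝ)/2)) (Ioc (0:ℝ) 1) := by
    have := (intervalIntegral.intervalIntegrable_rpow' (a := 0) (b := 1)
      (r := -(1:ℝ)/2) (by norm_num))
    rw [intervalIntegrable_iff_integrableOn_Ioc_of_le zero_le_one] at this
    exact this.const_mul 2
  refine hmaj.mono' ?_ ?_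
  · exact ((Real.measurable_exp.comp measurable_neg).mul Real.measurable_log).aestronglyMeasurable
  · filter_upwards [ae_restrict_mem measurableSet_Ioc] with x hx
    rw [norm_mul, norm_of_nonneg (Real.exp_pos _).le, Real.norm_eq_abs,
      abs_of_nonpos (Real.log_nonpos hx.1.le hx.2)]
    calc Real.exp (-x) * -Real.log x ≤ 1 * -Real.log x := by
          apply mul_le_mul_of_nonneg_right (Real.exp_le_one_iff.2 (by linarith [hx.1]))
          simpa using Real.log_nonpos hx.1.le hx.2
      _ ≤ 2 * x ^ (-(1:ℝ)/2) := by rw [one_mul]; exact neg_log_le hx.1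

lemma intOn_C : IntegrableOn (fun x => Real.exp (-x) * Real.log x) (Ioi (1:ℝ)) := by
  have hmaj : IntegrableOn (fun x => Real.exp (-x) * x ^ ((2:ℝ) - 1)) (Ioi (0:ℝ)) :=
    Real.GammaIntegral_convergent (by norm_num)
  refine (hmaj.mono (Ioi_subset_Ioi zero_le_one) le_rfl).mono' ?_ ?_
  · exact ((Real.measurable_exp.comp measurable_neg).mul Real.measurable_log).aestronglyMeasurable
  · filter_upwards [ae_restrict_mem measurableSet_Ioi] with x hx
    have hx1 : (1:ℝ) ≤ x := hx.le
    rw [norm_mul, norm_of_nonneg (Real.exp_pos _).le, Real.norm_eq_abs,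
      abs_of_nonneg (Real.log_nonneg hx1)]
    have : Real.log x ≤ x := (Real.log_le_sub_one_of_pos (by linarith)).trans (by linarith)
    calc Real.exp (-x) * Real.log x ≤ Real.exp (-x) * x :=
          mul_le_mul_of_nonneg_left this (Real.exp_pos _).le
      _ = Real.exp (-x) * x ^ ((2:ℝ)-1) := by norm_num

lemma intOn_D {a : ℝ} (ha : 0 < a) : IntegrableOn (fun x => x ^ (-2:ℝ)) (Ioi a) :=
  integrableOn_Ioi_rpow_of_lt (by norm_num) ha

lemma integral_D {a : ℝ} (ha : 0 < a) : ∫ x in Ioi a, x ^ (-2:ℝ) = a⁻¹ := by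
  rw [integral_Ioi_rpow_of_lt (by norm_num) ha]
  norm_num
  rw [Real.rpow_neg_one]

lemma partA : ∫ x in Ioi (1:ℝ), Real.exp (-x) / x
    = ∫ x in Ioi (1:ℝ), Real.exp (-x) * Real.log x := by
  have hderiv : ∀ x ∈ Ici (1:ℝ), HasDerivAt (fun x => Real.exp (-x) * Real.log x)
      (Real.exp (-x) / x - Real.exp (-x) * Real.log x) x := by
    intro x hx
    have hx0 : (0:ℝ) < x := lt_of_lt_of_le zero_lt_one hx
    have h1 : HasDerivAt (fun x : ℝ => Real.exp (-x)) (-Real.exp (-x)) x := by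
      simpa using (hasDerivAt_neg x).exp
    have h2 : HasDerivAt Real.log x⁻¹ x := Real.hasDerivAt_log hx0.ne'
    have : HasDerivAt (fun x => Real.exp (-x) * Real.log x) _ x := h1.mul h2
    convert this using 1
    field_simp
    ring
  have hint : IntegrableOn (fun x => Real.exp (-x) / x - Real.exp (-x) * Real.log x)
      (Ioi (1:ℝ)) := (intOn_exp_div zero_lt_one).sub intOn_C
  have htend : Tendsto (fun x => Real.exp (-x) * Real.log x) atTop (𝓝 0) := by
    have hg : Tendsto (fun x : ℝ => x ^ 1 * Real.exp (-x)) atTop (𝓝 0) :=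
      tendsto_pow_mul_exp_neg_atTop_nhds_zero 1
    refine squeeze_zero_norm' ?_ hg
    filter_upwards [eventually_ge_atTop (1:ℝ)] with x hx
    rw [norm_mul, norm_of_nonneg (Real.exp_pos _).le, Real.norm_eq_abs,
      abs_of_nonneg (Real.log_nonneg hx), pow_one]
    have hlog : Real.log x ≤ x := (Real.log_le_sub_one_of_pos (by linarith)).trans (by linarith)
    nlinarith [Real.exp_pos (-x)]
  have := integral_Ioi_of_hasDerivAt_of_tendsto' hderiv hint htend
  rw [integral_sub (intOn_exp_div zero_lt_one) intOn_C] at this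
  simp at this
  linarith

lemma partB : ∫ x in Ioc (0:ℝ) 1, (Real.exp (-x) - 1) / x
    = ∫ x in Ioc (0:ℝ) 1, Real.exp (-x) * Real.log x := by
  set h : ℝ → ℝ := fun x => (Real.exp (-x) - 1) / x - Real.exp (-x) * Real.log x with hh
  have hInt : IntegrableOn h (Ioc (0:ℝ) 1) := intOn_A.sub intOn_B
  have key : ∀ a ∈ Ioo (0:ℝ) 1, ∫ x in Ioc a 1, h x = (1 - Real.exp (-a)) * Real.log a := by
    intro a ha
    have hle : a ≤ 1 := ha.2.le
    have hderiv : ∀ x ∈ uIcc a 1, HasDerivAt (fun x => (Real.exp (-x) - 1) * Real.log x) (h x) x := by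
      intro x hx
      rw [uIcc_of_le hle] at hx
      have hx0 : (0:ℝ) < x := lt_of_lt_of_le ha.1 hx.1
      have h1 : HasDerivAt (fun x : ℝ => Real.exp (-x) - 1) (-Real.exp (-x)) x := by
        simpa using ((Real.hasDerivAt_exp (-x)).comp x (hasDerivAt_neg x)).sub_const 1
      have : HasDerivAt (fun x => (Real.exp (-x) - 1) * Real.log x) _ x := h1.mul (Real.hasDerivAt_log hx0.ne')
      convert this using 1
      rw [hh]
      field_simp
      ring
    have hii : IntervalIntegrable h volume a 1 := by
      rw [intervalIntegrable_iff_integrableOn_Ioc_of_le hle]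
      exact hInt.mono (Ioc_subset_Ioc ha.1.le le_rfl) le_rfl
    have := intervalIntegral.integral_eq_sub_of_hasDerivAt hderiv hii
    rw [intervalIntegral.integral_of_le hle] at this
    rw [this]
    simp
    ring
  have h1 : Tendsto (fun a => ∫ x in Ioc a 1, h x) (𝓝[>] (0:ℝ)) (𝓝 (∫ x in Ioc 0 1, h x)) :=
    tendsto_Ioc_left hInt
  have h2 : Tendsto (fun a => ∫ x in Ioc a 1, h x) (𝓝[>] (0:ℝ)) (𝓝 0) := by
    apply Tendsto.congr' (f₁ := fun a => (1 - Real.exp (-a)) * Real.log a)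
    · filter_upwards [Ioo_mem_nhdsGT (zero_lt_one (α := ℝ))] with a ha
      exact (key a ha).symm
    · have hg : Tendsto (fun a : ℝ => ‖Real.log a * a ^ (1:ℝ)‖) (𝓝[>] (0:ℝ)) (𝓝 0) := by
        simpa using (tendsto_log_mul_rpow_nhdsGT_zero one_pos).norm
      refine squeeze_zero_norm' ?_ hg
      filter_upwards [Ioo_mem_nhdsGT (zero_lt_one (α := ℝ))] with a ha
      have ha0 := ha.1
      have h3 : 1 - Real.exp (-a) ≤ a := by nlinarith [Real.add_one_le_exp (-a)]
      have h4 : 0 ≤ 1 - Real.exp (-a) := by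
        simp [Real.exp_le_one_iff.2 (by linarith : -a ≤ 0)]
      rw [norm_mul, norm_mul, Real.norm_eq_abs (Real.log a), Real.rpow_one,
        norm_of_nonneg h4, norm_of_nonneg ha0.le]
      rw [mul_comm (|Real.log a|) a]
      exact mul_le_mul_of_nonneg_right h3 (abs_nonneg _) |>.trans (by rw [mul_comm])
  have h0 : ∫ x in Ioc (0:ℝ) 1, h x = 0 := tendsto_nhds_unique h1 h2
  rw [hh] at h0
  rw [integral_sub intOn_A intOn_B] at h0
  linarith

lemma split_Ioi {f : ℝ → ℝ} {a : ℝ} (ha : 0 ≤ a) (ha1 : a ≤ 1)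
    (h1 : IntegrableOn f (Ioc a 1)) (h2 : IntegrableOn f (Ioi 1)) :
    ∫ x in Ioi a, f x = (∫ x in Ioc a 1, f x) + ∫ x in Ioi 1, f x := by
  rw [← Ioc_union_Ioi_eq_Ioi ha1,
    setIntegral_union (Ioc_disjoint_Ioi le_rfl) measurableSet_Ioi h1 h2]

lemma E1lim : Tendsto (fun a => (∫ x in Ioi a, Real.exp (-x) / x) + Real.log a)
    (𝓝[>] (0:ℝ)) (𝓝 (-Real.eulerMascheroniConstant)) := by
  have heq : ∀ᶠ a in 𝓝[>] (0:ℝ), (∫ x in Ioi a, Real.exp (-x) / x) + Real.log a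
      = (∫ x in Ioc a 1, (Real.exp (-x) - 1) / x) + ∫ x in Ioi 1, Real.exp (-x) / x := by
    filter_upwards [Ioo_mem_nhdsGT (zero_lt_one (α := ℝ))] with a ha
    have ha0 := ha.1
    have hle : a ≤ 1 := ha.2.le
    have hIoc : IntegrableOn (fun x => Real.exp (-x) / x) (Ioc a 1) :=
      (intOn_exp_div ha0).mono Ioc_subset_Ioi_self le_rfl
    have hsplit := split_Ioi ha0.le hle hIoc
      ((intOn_exp_div ha0).mono (Ioi_subset_Ioi hle) le_rfl)
    rw [hsplit]
    have hinv : IntegrableOn (fun x => x⁻¹) (Ioc a 1) := by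
      have : IntervalIntegrable (fun x => x⁻¹) volume a 1 :=
        intervalIntegral.intervalIntegrable_inv (fun x hx => by
          rw [uIcc_of_le hle] at hx; exact (lt_of_lt_of_le ha0 hx.1).ne') continuousOn_id
      rwa [intervalIntegrable_iff_integrableOn_Ioc_of_le hle] at this
    have hdecomp : ∫ x in Ioc a 1, Real.exp (-x) / x
        = (∫ x in Ioc a 1, (Real.exp (-x) - 1) / x) + ∫ x in Ioc a 1, x⁻¹ := by
      rw [← integral_add ((intOn_A.mono (Ioc_subset_Ioc ha0.le le_rfl) le_rfl)) hinv]
      refine setIntegral_congr_fun measurableSet_Ioc fun x hx => ?_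
      have hx0 : (0:ℝ) < x := lt_of_lt_of_le ha0 hx.1.le
      field_simp
      ring
    have hlog : ∫ x in Ioc a 1, x⁻¹ = -Real.log a := by
      have h0 : (0:ℝ) ∉ uIcc a 1 := by
        rw [uIcc_of_le hle]; exact fun h => absurd h.1 (not_le.2 ha0)
      have := integral_inv h0
      rw [intervalIntegral.integral_of_le hle] at this
      rw [this, Real.log_div one_ne_zero ha0.ne', Real.log_one]
      ring
    rw [hdecomp, hlog]
    ring
  have hlim : Tendsto (fun a => (∫ x in Ioc a 1, (Real.exp (-x) - 1) / x)
      + ∫ x in Ioi 1, Real.exp (-x) / x) (𝓝[>] (0:ℝ))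
      (𝓝 ((∫ x in Ioc (0:ℝ) 1, (Real.exp (-x) - 1) / x) + ∫ x in Ioi 1, Real.exp (-x) / x)) :=
    (tendsto_Ioc_left intOn_A).add_const _
  have hval : (∫ x in Ioc (0:ℝ) 1, (Real.exp (-x) - 1) / x) + (∫ x in Ioi 1, Real.exp (-x) / x)
      = -Real.eulerMascheroniConstant := by
    rw [partA, partB]
    rw [← split_Ioi le_rfl zero_le_one intOn_B intOn_C]
    rw [← gammaInt]
    refine setIntegral_congr_fun measurableSet_Ioi fun x hx => mul_comm _ _
  rw [← hval]
  exact Tendsto.congr' (heq.mono fun a h => h.symm) hlim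

lemma cov {s : ℝ} (hs : 0 < s) :
    ∫ t in Ioi (0:ℝ), Real.exp (-s * Real.cosh t)
      = ∫ x in Ioi (s/2), Real.exp (-x - s^2/(4*x)) / x := by
  have himg : (fun t => s/2 * Real.exp t) '' Ioi 0 = Ioi (s/2) := by
    ext x
    constructor
    · rintro ⟨t, ht, rfl⟩
      have h1 : 1 < Real.exp t := Real.one_lt_exp_iff.mpr ht
      have : s/2 * 1 < s/2 * Real.exp t := by
        apply mul_lt_mul_of_pos_left h1 (by linarith)
      simpa using this
    · intro hx
      refine ⟨Real.log (x / (s/2)), ?_, ?_⟩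
      · apply Real.log_pos
        rw [lt_div_iff₀ (by linarith)]
        simpa using hx.out
      · have hx0 : (0:ℝ) < x := lt_trans (by linarith) hx.out
        show s/2 * Real.exp (Real.log (x / (s/2))) = x
        rw [Real.exp_log (by positivity : (0:ℝ) < x / (s/2))]
        field_simp
  have hder : ∀ t ∈ Ioi (0:ℝ), HasDerivWithinAt (fun t => s/2 * Real.exp t)
      (s/2 * Real.exp t) (Ioi 0) t := fun t _ =>
    ((Real.hasDerivAt_exp t).const_mul (s/2)).hasDerivWithinAt
  have hinj : InjOn (fun t => s/2 * Real.exp t) (Ioi 0) :=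
    fun a _ b _ h => by
      have := mul_left_cancel₀ (by positivity : s/2 ≠ 0) h
      exact Real.exp_injective this
  rw [← himg, integral_image_eq_integral_abs_deriv_smul measurableSet_Ioi hder hinj]
  refine setIntegral_congr_fun measurableSet_Ioi fun t ht => ?_
  have he : (0:ℝ) < s/2 * Real.exp t := by positivity
  rw [smul_eq_mul, abs_of_pos he]
  rw [mul_div_cancel₀ _ he.ne']
  congr 1
  rw [Real.cosh_eq]
  have h1 : s^2 / (4 * (s/2 * Real.exp t)) = s/2 * Real.exp (-t) := by
    rw [Real.exp_neg]
    field_simp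
    ring
  rw [h1]
  ring

lemma Dlim : Tendsto (fun s => (∫ x in Ioi (s/2), Real.exp (-x) / x)
      - ∫ x in Ioi (s/2), Real.exp (-x - s^2/(4*x)) / x) (𝓝[>] (0:ℝ)) (𝓝 0) := by
  have key : ∀ s ∈ Ioi (0:ℝ),
      (0 ≤ (∫ x in Ioi (s/2), Real.exp (-x) / x)
        - ∫ x in Ioi (s/2), Real.exp (-x - s^2/(4*x)) / x) ∧
      ((∫ x in Ioi (s/2), Real.exp (-x) / x)
        - ∫ x in Ioi (s/2), Real.exp (-x - s^2/(4*x)) / x) ≤ s/2 := by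
    intro s hs
    have hs0 : (0:ℝ) < s := hs
    have ha : (0:ℝ) < s/2 := by linarith
    set c : ℝ := s^2/4 with hcc
    have hc : (0:ℝ) ≤ c := by positivity
    have hfun : ∀ x : ℝ, Real.exp (-x - s^2/(4*x)) / x = Real.exp (-x - c / x) / x := by
      intro x; rw [hcc, div_div]
    have hi1 := intOn_exp_div ha
    have hi2 : IntegrableOn (fun x => Real.exp (-x - s^2/(4*x)) / x) (Ioi (s/2)) := by
      simp_rw [hfun]; exact intOn_exp_sub_div ha hc
    have hmono : ∀ x ∈ Ioi (s/2), Real.exp (-x - s^2/(4*x)) / x ≤ Real.exp (-x) / x := by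
      intro x hx
      have hx0 : (0:ℝ) < x := lt_trans ha hx
      gcongr
      nlinarith [div_nonneg (sq_nonneg s) (by linarith : (0:ℝ) ≤ 4*x)]
    constructor
    · rw [← integral_sub hi1 hi2]
      exact setIntegral_nonneg measurableSet_Ioi fun x hx => sub_nonneg.2 (hmono x hx)
    · rw [← integral_sub hi1 hi2]
      have hbd : ∀ x ∈ Ioi (s/2),
          Real.exp (-x) / x - Real.exp (-x - s^2/(4*x)) / x ≤ c * x ^ (-2:ℝ) := by
        intro x hx
        have hx0 : (0:ℝ) < x := lt_trans ha hx
        rw [hfun]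
        have h3 : Real.exp (-x - c/x) = Real.exp (-x) * Real.exp (-(c/x)) := by
          rw [← Real.exp_add]; ring_nf
        have h1 : 1 - Real.exp (-(c/x)) ≤ c/x := by nlinarith [Real.add_one_le_exp (-(c/x))]
        have h2 : Real.exp (-x) ≤ 1 := Real.exp_le_one_iff.2 (by linarith)
        have hF1 : Real.exp (-(c/x)) ≤ 1 :=
          Real.exp_le_one_iff.2 (neg_nonpos.2 (div_nonneg hc hx0.le))
        have hrpow : x ^ (-2:ℝ) = (x^2)⁻¹ := by
          rw [Real.rpow_neg hx0.le, show ((2:ℝ)) = ((2:ℕ):ℝ) by norm_num, Real.rpow_natCast]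
        rw [h3, hrpow, ← sub_div, div_le_iff₀ hx0]
        have hx2 : c * (x^2)⁻¹ * x = c / x := by field_simp
        rw [hx2]
        have hEF : Real.exp (-x) * (1 - Real.exp (-(c/x))) ≤ 1 * (c/x) :=
          mul_le_mul h2 h1 (by linarith) zero_le_one
        nlinarith [Real.exp_pos (-x)]
      calc (∫ x in Ioi (s/2), (Real.exp (-x)/x - Real.exp (-x - s^2/(4*x))/x))
          ≤ ∫ x in Ioi (s/2), c * x ^ (-2:ℝ) := by
            refine setIntegral_mono_on (hi1.sub hi2) ((intOn_D ha).const_mul c)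
              measurableSet_Ioi hbd
        _ = c * (s/2)⁻¹ := by rw [integral_const_mul, integral_D ha]
        _ = s/2 := by rw [hcc]; field_simp; ring
  have h0 : Tendsto (fun s : ℝ => s/2) (𝓝[>] (0:ℝ)) (𝓝 0) := by
    have : Tendsto (fun s : ℝ => s/2) (𝓝 (0:ℝ)) (𝓝 0) := by
      simpa using (continuous_id.div_const 2).tendsto (0:ℝ)
    exact this.mono_left nhdsWithin_le_nhds
  refine tendsto_of_tendsto_of_tendsto_of_le_of_le' tendsto_const_nhds h0 ?_ ?_
  · filter_upwards [self_mem_nhdsWithin] with s hs using (key s hs).1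
  · filter_upwards [self_mem_nhdsWithin] with s hs using (key s hs).2

/-- As `s → 0⁺`, `K_0(s) + log s → log 2 - γ`, where `γ` is the Euler–Mascheroni constant.
That is, `K_0(s) = -log s + log 2 - γ + o(1)` as `s → 0⁺`. -/
theorem besselK0_add_log_tendsto :
    Tendsto (fun s : ℝ => (∫ t in Ioi (0:ℝ), Real.exp (-s * Real.cosh t)) + Real.log s)
      (nhdsWithin 0 (Ioi 0))
      (nhds (Real.log 2 - Real.eulerMascheroniConstant)) := by
  have hhalf : Tendsto (fun s : ℝ => s/2) (𝓝[>] (0:ℝ)) (𝓝[>] (0:ℝ)) := by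
    apply tendsto_nhdsWithin_of_tendsto_nhds_of_eventually_within
    · have : Tendsto (fun s : ℝ => s/2) (𝓝 (0:ℝ)) (𝓝 0) := by
        simpa using (continuous_id.div_const 2).tendsto (0:ℝ)
      exact this.mono_left nhdsWithin_le_nhds
    · filter_upwards [self_mem_nhdsWithin] with s hs
      exact mem_Ioi.2 (by linarith [mem_Ioi.1 hs])
  have T1 : Tendsto (fun s : ℝ => (∫ x in Ioi (s/2), Real.exp (-x) / x) + Real.log (s/2))
      (𝓝[>] (0:ℝ)) (𝓝 (-Real.eulerMascheroniConstant)) := E1lim.comp hhalf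
  have Ttot := (T1.sub Dlim).add_const (Real.log 2)
  have hlim : -Real.eulerMascheroniConstant - 0 + Real.log 2
      = Real.log 2 - Real.eulerMascheroniConstant := by ring
  rw [hlim] at Ttot
  refine Tendsto.congr' ?_ Ttot
  filter_upwards [self_mem_nhdsWithin] with s hs
  have hs0 : (0:ℝ) < s := hs
  have hlogs : Real.log s = Real.log (s/2) + Real.log 2 := by
    rw [← Real.log_mul (by positivity) two_ne_zero, div_mul_cancel₀]
    norm_num
  rw [cov hs0, hlogs]
  ring
end

section
/- Let a ≥ 3 be real and let c ∈ (0,1). Then there exist constants 0 < C₁ ≤ C₂ (depending on a and c) such that for all u > 0: C₁·u^{2−a}·e^{−u} ≤ L̃_a(u) ≤ C₂·u^{2−a}·e^{−cu}. -/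
open MeasureTheory Real Set

/-- `L̃_a(u) = ∫_0^∞ exp(-s - u²/(4s)) s^{-a/2} ds` for `u > 0`. -/
noncomputable def Ltilde (a u : ℝ) : ℝ :=
  ∫ s in Ioi (0:ℝ), Real.exp (-s - u^2 / (4*s)) * s ^ (-a/2)

/-- `x^k e^{-x} ≤ (k/e)^k` for positive `x, k`. -/
lemma rpow_mul_exp_neg_le {k x : ℝ} (hk : 0 < k) (hx : 0 < x) :
    x ^ k * Real.exp (-x) ≤ (k / Real.exp 1) ^ k := by
  have hke : 0 < k / Real.exp 1 := by positivity
  rw [Real.rpow_def_of_pos hx, Real.rpow_def_of_pos hke, ← Real.exp_add, Real.exp_le_exp]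
  have h := Real.log_le_sub_one_of_pos (show 0 < x / k by positivity)
  rw [Real.log_div hx.ne' hk.ne'] at h
  have hlog : Real.log (k / Real.exp 1) = Real.log k - 1 := by
    rw [Real.log_div hk.ne' (Real.exp_ne_zero 1), Real.log_exp]
  rw [hlog]
  have h2 := mul_le_mul_of_nonneg_right h hk.le
  have hxk : x / k * k = x := div_mul_cancel₀ x hk.ne'
  nlinarith [h2, hxk]

/-- `exp(-x) ≤ (k/e)^k x^{-k}`. -/
lemma exp_neg_le_rpow {k x : ℝ} (hk : 0 < k) (hx : 0 < x) :
    Real.exp (-x) ≤ (k / Real.exp 1) ^ k * x ^ (-k) := by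
  have h := rpow_mul_exp_neg_le hk hx
  have h0 : Real.exp (-x) = x ^ (-k) * (x ^ k * Real.exp (-x)) := by
    rw [← mul_assoc, ← Real.rpow_add hx]
    simp
  rw [h0, mul_comm ((k / Real.exp 1) ^ k)]
  exact mul_le_mul_of_nonneg_left h (by positivity)

set_option maxHeartbeats 1000000 in
/-- For `a ≥ 3` and `c ∈ (0,1)` there are constants `0 < C₁ ≤ C₂` with
`C₁ u^{2-a} e^{-u} ≤ L̃_a(u) ≤ C₂ u^{2-a} e^{-cu}` for all `u > 0`. -/
theorem Ltilde_bounds (a c : ℝ) (ha : 3 ≤ a) (hc : c ∈ Ioo (0:ℝ) 1) :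
    ∃ C₁ C₂ : ℝ, 0 < C₁ ∧ C₁ ≤ C₂ ∧ ∀ u : ℝ, 0 < u →
      C₁ * u ^ (2 - a) * Real.exp (-u) ≤ Ltilde a u ∧
      Ltilde a u ≤ C₂ * u ^ (2 - a) * Real.exp (-(c * u)) := by
  obtain ⟨hc0, hc1⟩ := hc
  have hnd : (-a/2 : ℝ) = -(a/2) := neg_div 2 a
  set b : ℝ := 1 - c with hb_def
  have hb0 : 0 < b := by simp [hb_def]; linarith
  clear_value b
  set K : ℝ := ((a/2) / Real.exp 1) ^ (a/2) * (b/4) ^ (-(a/2)) with hK_def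
  have hK0 : 0 < K := by positivity
  clear_value K
  set C₁ : ℝ := Real.exp (-(9/4 : ℝ)) * (3:ℝ) ^ (-(a/2)) with hC1_def
  have hC10 : 0 < C₁ := by positivity
  clear_value C₁
  set D : ℝ := K + 2 / (a - 2) with hD_def
  have hD0 : 0 < D := by
    have : (0:ℝ) < 2 / (a - 2) := by
      apply div_pos; norm_num; linarith
    simp only [hD_def]; linarith
  clear_value D
  refine ⟨C₁, max C₁ D, hC10, le_max_left _ _, fun u hu => ?_⟩
  set f : ℝ → ℝ := fun s => Real.exp (-s - u^2 / (4*s)) * s ^ (-a/2) with hf_def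
  have hfnn : ∀ s : ℝ, 0 < s → 0 ≤ f s := fun s hs => by positivity
  -- AM-GM: u ≤ s + u²/(4s)
  have hAM : ∀ s : ℝ, 0 < s → u ≤ s + u^2 / (4*s) := by
    intro s hs
    rw [← sub_le_iff_le_add', le_div_iff₀ (by linarith)]
    nlinarith [sq_nonneg (2*s - u)]
  -- pointwise upper bound 1 (constant)
  have hub1 : ∀ s : ℝ, 0 < s → f s ≤ Real.exp (-(c*u)) * (K * u ^ (-a)) := by
    intro s hs
    have hx : 0 < b * u^2 / (4*s) := by positivity
    have step1 : Real.exp (-s - u^2/(4*s)) ≤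
        Real.exp (-(c*u)) * Real.exp (-(b * u^2 / (4*s))) := by
      rw [← Real.exp_add, Real.exp_le_exp]
      have h1 := hAM s hs
      have h2 : c * u ≤ c * (s + u^2/(4*s)) := by
        apply mul_le_mul_of_nonneg_left h1 hc0.le
      have hs' : 0 ≤ b * s := by positivity
      have : -s - u^2/(4*s) = -(c * (s + u^2/(4*s))) - b * s - b * (u^2/(4*s)) := by
        simp only [hb_def]; ring
      rw [this]
      have : b * u^2 / (4*s) = b * (u^2/(4*s)) := by ring
      rw [this]
      linarith
    have step2 : Real.exp (-(b * u^2 / (4*s))) * s ^ (-a/2) ≤ K * u ^ (-a) := by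
      have ha2 : (0:ℝ) < a/2 := by linarith
      have h3 := exp_neg_le_rpow ha2 hx
      have hsn : (0:ℝ) ≤ s ^ (-a/2) := by positivity
      calc Real.exp (-(b * u^2 / (4*s))) * s ^ (-a/2)
          ≤ ((a/2) / Real.exp 1) ^ (a/2) * (b * u^2 / (4*s)) ^ (-(a/2)) * s ^ (-a/2) :=
            mul_le_mul_of_nonneg_right h3 hsn
        _ = K * u ^ (-a) := by
            have hXs : (b * u^2 / (4*s)) ^ (-(a/2) : ℝ) * s ^ (-(a/2) : ℝ)
                = (b/4) ^ (-(a/2) : ℝ) * u ^ (-a : ℝ) := by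
              rw [← Real.mul_rpow hx.le hs.le]
              have he : b * u^2 / (4*s) * s = (b/4) * u^2 := by
                field_simp
              rw [he, Real.mul_rpow (by positivity) (by positivity)]
              congr 1
              rw [← Real.rpow_natCast u 2, ← Real.rpow_mul hu.le]
              congr 1
              push_cast; ring
            rw [hnd]
            calc ((a/2) / Real.exp 1) ^ (a/2) * (b * u^2 / (4*s)) ^ (-(a/2) : ℝ) * s ^ (-(a/2) : ℝ)
                = ((a/2) / Real.exp 1) ^ (a/2) * ((b * u^2 / (4*s)) ^ (-(a/2) : ℝ) * s ^ (-(a/2) : ℝ)) := by ring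
              _ = ((a/2) / Real.exp 1) ^ (a/2) * ((b/4) ^ (-(a/2) : ℝ) * u ^ (-a : ℝ)) := by rw [hXs]
              _ = K * u ^ (-a) := by rw [hK_def]; ring
    calc f s = Real.exp (-s - u^2/(4*s)) * s ^ (-a/2) := rfl
      _ ≤ (Real.exp (-(c*u)) * Real.exp (-(b * u^2 / (4*s)))) * s ^ (-a/2) := by
          apply mul_le_mul_of_nonneg_right step1 (by positivity)
      _ = Real.exp (-(c*u)) * (Real.exp (-(b * u^2 / (4*s))) * s ^ (-a/2)) := by ring
      _ ≤ Real.exp (-(c*u)) * (K * u ^ (-a)) := by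
          apply mul_le_mul_of_nonneg_left step2 (by positivity)
  -- pointwise upper bound 2 (tail)
  have hub2 : ∀ s : ℝ, 0 < s → f s ≤ Real.exp (-(c*u)) * s ^ (-a/2) := by
    intro s hs
    apply mul_le_mul_of_nonneg_right _ (by positivity)
    rw [Real.exp_le_exp]
    have h1 := hAM s hs
    have h2 : c * u ≤ u := by nlinarith
    linarith
  -- continuity and measurability
  have hcont : ContinuousOn f (Ioi (0:ℝ)) := by
    apply ContinuousOn.mul
    · apply Real.continuous_exp.comp_continuousOn
      apply ContinuousOn.sub continuous_neg.continuousOn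
      apply ContinuousOn.div continuousOn_const
        ((continuous_const.mul continuous_id).continuousOn)
      intro s hs
      have : (0:ℝ) < s := hs
      exact mul_ne_zero (by norm_num) (ne_of_gt this)
    · exact ContinuousOn.rpow_const continuousOn_id (fun s hs => Or.inl (ne_of_gt hs))
  have hmeas : AEStronglyMeasurable f (volume.restrict (Ioi (0:ℝ))) :=
    hcont.aestronglyMeasurable measurableSet_Ioi
  -- integrability on the two pieces
  have hu2 : (0:ℝ) < u^2 := by positivity
  have hi1 : IntegrableOn f (Ioc 0 (u^2)) := by
    apply Integrable.mono' (integrable_const (Real.exp (-(c*u)) * (K * u ^ (-a))))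
      (hmeas.mono_measure (Measure.restrict_mono Ioc_subset_Ioi_self le_rfl))
    rw [ae_restrict_iff' measurableSet_Ioc]
    apply ae_of_all
    intro s hs
    rw [Real.norm_eq_abs, abs_of_nonneg (hfnn s hs.1)]
    exact hub1 s hs.1
  have hi2 : IntegrableOn f (Ioi (u^2)) := by
    apply Integrable.mono' ((integrableOn_Ioi_rpow_of_lt (show -a/2 < -1 by linarith) hu2))
      (hmeas.mono_measure (Measure.restrict_mono (Ioi_subset_Ioi hu2.le) le_rfl))
    rw [ae_restrict_iff' measurableSet_Ioi]
    apply ae_of_all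
    intro s hs
    have hs0 : (0:ℝ) < s := lt_trans hu2 hs
    rw [Real.norm_eq_abs, abs_of_nonneg (hfnn s hs0)]
    calc f s ≤ Real.exp (-(c*u)) * s ^ (-a/2) := hub2 s hs0
      _ ≤ 1 * s ^ (-a/2) := by
          apply mul_le_mul_of_nonneg_right _ (by positivity)
          rw [Real.exp_le_one_iff]; nlinarith
      _ = s ^ (-a/2) := one_mul _
  have hsplit : Ioc (0:ℝ) (u^2) ∪ Ioi (u^2) = Ioi 0 := Ioc_union_Ioi_eq_Ioi hu2.le
  have hi : IntegrableOn f (Ioi (0:ℝ)) := by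
    rw [← hsplit]; exact hi1.union hi2
  have hfnn_ae : 0 ≤ᵐ[volume.restrict (Ioi (0:ℝ))] f := by
    filter_upwards [ae_restrict_mem measurableSet_Ioi] with s hs using hfnn s hs
  constructor
  · -- LOWER BOUND
    rcases le_total u 1 with hu1 | hu1
    · -- small u: interval [u², 2u²]
      set m : ℝ := Real.exp (-(9/4 : ℝ)) * (2*u^2) ^ (-a/2) with hm_def
      have hlow : ∀ s ∈ Ioc (u^2) (2*u^2), m ≤ f s := by
        intro s hs
        obtain ⟨hs1, hs2⟩ := hs
        have hs0 : (0:ℝ) < s := lt_trans hu2 hs1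
        have e1 : -(9/4 : ℝ) ≤ -s - u^2/(4*s) := by
          have h1 : u^2/(4*s) ≤ 1/4 := by
            rw [div_le_iff₀ (by linarith)]
            nlinarith
          have h2 : s ≤ 2 := by nlinarith
          linarith
        have e2 : (2*u^2 : ℝ) ^ (-a/2) ≤ s ^ (-a/2) :=
          Real.rpow_le_rpow_of_nonpos hs0 hs2 (by linarith)
        calc m ≤ Real.exp (-s - u^2/(4*s)) * (2*u^2) ^ (-a/2) := by
              apply mul_le_mul_of_nonneg_right (Real.exp_le_exp.2 e1) (by positivity)
          _ ≤ f s := mul_le_mul_of_nonneg_left e2 (by positivity)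
      have hsub : Ioc (u^2) (2*u^2) ⊆ Ioi (0:ℝ) := fun s hs => lt_trans hu2 hs.1
      have step : (2*u^2 - u^2) * m ≤ Ltilde a u := by
        have h1 : ∫ s in Ioc (u^2) (2*u^2), (m : ℝ) ≤ ∫ s in Ioc (u^2) (2*u^2), f s := by
          exact setIntegral_mono_on (integrableOn_const measure_Ioc_lt_top.ne)
            (hi.mono_set hsub) measurableSet_Ioc hlow
        have h2 : ∫ s in Ioc (u^2) (2*u^2), f s ≤ ∫ s in Ioi (0:ℝ), f s :=
          setIntegral_mono_set hi hfnn_ae (HasSubset.Subset.eventuallyLE hsub)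
        have h3 : ∫ s in Ioc (u^2) (2*u^2), (m : ℝ) = (2*u^2 - u^2) * m := by
          rw [setIntegral_const, Real.volume_real_Ioc, max_eq_left (by nlinarith),
            smul_eq_mul]
        rw [← h3]
        exact le_trans h1 h2
      refine le_trans ?_ step
      have key : (2*u^2 - u^2) * m = Real.exp (-(9/4 : ℝ)) * (2:ℝ)^(-a/2) * u ^ (2-a) := by
        have h4 : (2*u^2 : ℝ) ^ (-a/2 : ℝ) = (2:ℝ)^(-a/2) * (u^2:ℝ)^(-a/2) :=
          Real.mul_rpow (by norm_num) (by positivity)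
        have h5 : ((u^2 : ℝ)) ^ (-a/2 : ℝ) = u ^ (-a) := by
          rw [← Real.rpow_natCast u 2, ← Real.rpow_mul hu.le]
          congr 1; push_cast; try ring
        have h6 : u^2 * u ^ (-a : ℝ) = u ^ (2-a) := by
          rw [← Real.rpow_natCast u 2, ← Real.rpow_add hu,
            show ((2:ℕ):ℝ) + -a = 2 - a by push_cast; ring]
        rw [hm_def, h4, h5]
        calc (2*u^2 - u^2) * (Real.exp (-(9/4:ℝ)) * ((2:ℝ)^(-a/2) * u ^ (-a)))
            = Real.exp (-(9/4:ℝ)) * (2:ℝ)^(-a/2) * (u^2 * u ^ (-a:ℝ)) := by ring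
          _ = Real.exp (-(9/4:ℝ)) * (2:ℝ)^(-a/2) * u ^ (2-a) := by rw [h6]
      rw [key]
      have h7 : (3:ℝ)^(-(a/2):ℝ) ≤ (2:ℝ)^(-a/2 : ℝ) := by
        have : (-(a/2) : ℝ) = -a/2 := by ring
        rw [this]
        exact Real.rpow_le_rpow_of_nonpos (by norm_num) (by norm_num) (by linarith)
      have h8 : Real.exp (-u) ≤ 1 := by rw [Real.exp_le_one_iff]; linarith
      have h9 : (0:ℝ) ≤ u ^ (2-a) := by positivity
      calc C₁ * u ^ (2-a) * Real.exp (-u) ≤ C₁ * u ^ (2-a) * 1 := by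
            apply mul_le_mul_of_nonneg_left h8
              (mul_pos hC10 (Real.rpow_pos_of_pos hu _)).le
        _ = Real.exp (-(9/4:ℝ)) * (3:ℝ)^(-(a/2)) * u ^ (2-a) := by rw [hC1_def]; ring
        _ ≤ Real.exp (-(9/4:ℝ)) * (2:ℝ)^(-a/2) * u ^ (2-a) := by
            apply mul_le_mul_of_nonneg_right _ h9
            apply mul_le_mul_of_nonneg_left h7 (by positivity)
    · -- large u: interval [u/2, u/2 + √u]
      have hsq : (0:ℝ) < Real.sqrt u := Real.sqrt_pos.2 hu
      have hsqu : Real.sqrt u ≤ u := by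
        calc Real.sqrt u ≤ Real.sqrt (u^2) := Real.sqrt_le_sqrt (by nlinarith)
          _ = u := Real.sqrt_sq hu.le
      set m : ℝ := Real.exp (-(u+2)) * (3*u/2) ^ (-a/2) with hm_def
      have hlow : ∀ s ∈ Ioc (u/2) (u/2 + Real.sqrt u), m ≤ f s := by
        intro s hs
        obtain ⟨hs1, hs2⟩ := hs
        have hs0 : (0:ℝ) < s := by linarith
        have ht2 : (s - u/2)^2 ≤ u := by
          have h1 : s - u/2 ≤ Real.sqrt u := by linarith
          have h2 : (0:ℝ) ≤ s - u/2 := by linarith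
          nlinarith [Real.sq_sqrt hu.le]
        have e1 : -(u+2) ≤ -s - u^2/(4*s) := by
          have h1 : u^2/(4*s) ≤ u + 2 - s := by
            rw [div_le_iff₀ (by linarith)]
            nlinarith
          linarith
        have hs3 : s ≤ 3*u/2 := by linarith
        have e2 : (3*u/2 : ℝ) ^ (-a/2) ≤ s ^ (-a/2) :=
          Real.rpow_le_rpow_of_nonpos hs0 hs3 (by linarith)
        calc m ≤ Real.exp (-s - u^2/(4*s)) * (3*u/2) ^ (-a/2) := by
              apply mul_le_mul_of_nonneg_right (Real.exp_le_exp.2 e1) (by positivity)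
          _ ≤ f s := mul_le_mul_of_nonneg_left e2 (by positivity)
      have hsub : Ioc (u/2) (u/2 + Real.sqrt u) ⊆ Ioi (0:ℝ) := fun s hs => by
        have := hs.1; simp only [mem_Ioi]; linarith
      have step : Real.sqrt u * m ≤ Ltilde a u := by
        have h1 : ∫ s in Ioc (u/2) (u/2 + Real.sqrt u), (m : ℝ)
            ≤ ∫ s in Ioc (u/2) (u/2 + Real.sqrt u), f s := by
          exact setIntegral_mono_on (integrableOn_const measure_Ioc_lt_top.ne)
            (hi.mono_set hsub) measurableSet_Ioc hlow
        have h2 : ∫ s in Ioc (u/2) (u/2 + Real.sqrt u), f s ≤ ∫ s in Ioi (0:ℝ), f s :=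
          setIntegral_mono_set hi hfnn_ae (HasSubset.Subset.eventuallyLE hsub)
        have h3 : ∫ s in Ioc (u/2) (u/2 + Real.sqrt u), (m : ℝ) = Real.sqrt u * m := by
          rw [setIntegral_const, Real.volume_real_Ioc, smul_eq_mul]
          congr 1
          rw [show u/2 + Real.sqrt u - u/2 = Real.sqrt u by ring,
            max_eq_left hsq.le]
        rw [← h3]
        exact le_trans h1 h2
      refine le_trans ?_ step
      -- need : C₁ * u^(2-a) * exp(-u) ≤ √u * exp(-(u+2)) * (3u/2)^(-a/2)
      have key : Real.sqrt u * m
          = Real.exp (-2:ℝ) * ((3/2:ℝ)^(-a/2) * (u ^ ((1-a)/2))) * Real.exp (-u) := by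
        have h4 : (3*u/2 : ℝ) ^ (-a/2 : ℝ) = (3/2:ℝ)^(-a/2) * u^(-a/2 : ℝ) := by
          rw [show (3*u/2 : ℝ) = (3/2) * u by ring]
          exact Real.mul_rpow (by norm_num) hu.le
        have h5 : Real.sqrt u * u ^ (-a/2 : ℝ) = u ^ ((1-a)/2 : ℝ) := by
          rw [Real.sqrt_eq_rpow, ← Real.rpow_add hu]
          congr 1; ring
        have h6 : Real.exp (-(u+2)) = Real.exp (-2:ℝ) * Real.exp (-u) := by
          rw [← Real.exp_add]; congr 1; ring
        rw [hm_def, h4, h6]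
        calc Real.sqrt u * (Real.exp (-2:ℝ) * Real.exp (-u) * ((3/2:ℝ)^(-a/2) * u^(-a/2:ℝ)))
            = Real.exp (-2:ℝ) * ((3/2:ℝ)^(-a/2) * (Real.sqrt u * u^(-a/2:ℝ))) * Real.exp (-u) := by
              ring
          _ = _ := by rw [h5]
      rw [key]
      apply mul_le_mul_of_nonneg_right _ (Real.exp_pos _).le
      have h7 : u ^ (2-a : ℝ) ≤ u ^ ((1-a)/2 : ℝ) :=
        Real.rpow_le_rpow_of_exponent_le hu1 (by linarith)
      have h8 : (3:ℝ)^(-(a/2):ℝ) ≤ (3/2:ℝ)^(-a/2 : ℝ) := by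
        rw [show (-(a/2) : ℝ) = -a/2 by ring]
        exact Real.rpow_le_rpow_of_nonpos (by norm_num) (by norm_num) (by linarith)
      have h9 : Real.exp (-(9/4:ℝ)) ≤ Real.exp (-2:ℝ) := by
        rw [Real.exp_le_exp]; norm_num
      calc C₁ * u ^ (2-a)
          = Real.exp (-(9/4:ℝ)) * ((3:ℝ)^(-(a/2)) * u ^ (2-a)) := by rw [hC1_def]; ring
        _ ≤ Real.exp (-2:ℝ) * ((3/2:ℝ)^(-a/2) * u ^ ((1-a)/2)) := by
            apply mul_le_mul h9 _ (by positivity) (Real.exp_pos _).le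
            apply mul_le_mul h8 h7 (by positivity) (by positivity)
  · -- UPPER BOUND
    have hdisj : Disjoint (Ioc (0:ℝ) (u^2)) (Ioi (u^2)) := Ioc_disjoint_Ioi_same
    have hLsplit : Ltilde a u = (∫ s in Ioc (0:ℝ) (u^2), f s) + ∫ s in Ioi (u^2), f s := by
      rw [Ltilde, ← hsplit, setIntegral_union hdisj measurableSet_Ioi hi1 hi2]
    have hb1 : (∫ s in Ioc (0:ℝ) (u^2), f s)
        ≤ K * u ^ (2-a) * Real.exp (-(c*u)) := by
      have h1 : (∫ s in Ioc (0:ℝ) (u^2), f s)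
          ≤ ∫ _ in Ioc (0:ℝ) (u^2), (Real.exp (-(c*u)) * (K * u ^ (-a))) := by
        refine setIntegral_mono_on hi1 (integrableOn_const measure_Ioc_lt_top.ne)
          measurableSet_Ioc ?_
        intro s hs
        exact hub1 s hs.1
      have h2 : ∫ _ in Ioc (0:ℝ) (u^2), (Real.exp (-(c*u)) * (K * u ^ (-a)))
          = u^2 * (Real.exp (-(c*u)) * (K * u ^ (-a))) := by
        rw [setIntegral_const, Real.volume_real_Ioc, smul_eq_mul]
        congr 1
        rw [show u^2 - 0 = u^2 by ring, max_eq_left hu2.le]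
      have h6 : u^2 * u ^ (-a : ℝ) = u ^ (2-a) := by
        rw [← Real.rpow_natCast u 2, ← Real.rpow_add hu,
          show ((2:ℕ):ℝ) + -a = 2 - a by push_cast; ring]
      calc (∫ s in Ioc (0:ℝ) (u^2), f s)
          ≤ u^2 * (Real.exp (-(c*u)) * (K * u ^ (-a))) := h1.trans_eq h2
        _ = K * (u^2 * u ^ (-a:ℝ)) * Real.exp (-(c*u)) := by ring
        _ = K * u ^ (2-a) * Real.exp (-(c*u)) := by rw [h6]
    have hb2 : (∫ s in Ioi (u^2), f s)
        ≤ (2/(a-2)) * u ^ (2-a) * Real.exp (-(c*u)) := by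
      have h1 : (∫ s in Ioi (u^2), f s)
          ≤ ∫ s in Ioi (u^2), Real.exp (-(c*u)) * s ^ (-a/2) := by
        apply setIntegral_mono_on hi2 _ measurableSet_Ioi
        · intro s hs
          exact hub2 s (lt_trans hu2 hs)
        · exact (integrableOn_Ioi_rpow_of_lt (show -a/2 < -1 by linarith) hu2).const_mul _
      have h2 : ∫ s in Ioi (u^2), Real.exp (-(c*u)) * s ^ (-a/2)
          = Real.exp (-(c*u)) * (-(u^2:ℝ) ^ (-a/2 + 1) / (-a/2 + 1)) := by
        rw [integral_const_mul, integral_Ioi_rpow_of_lt (show -a/2 < -1 by linarith) hu2]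
      have h3 : -(u^2:ℝ) ^ (-a/2 + 1) / (-a/2 + 1) = (2/(a-2)) * u ^ (2-a) := by
        have h5 : ((u^2 : ℝ)) ^ (-a/2 + 1 : ℝ) = u ^ (2-a) := by
          rw [← Real.rpow_natCast u 2, ← Real.rpow_mul hu.le]
          congr 1; push_cast; try ring
        rw [h5, div_eq_iff (show (-a/2 + 1 : ℝ) ≠ 0 by intro h; nlinarith)]
        have ha2' : a - 2 ≠ 0 := by intro h; linarith
        have hq : (2/(a-2)) * (-a/2 + 1) = -1 := by
          field_simp
          ring
        linear_combination (-(u ^ ((2:ℝ)-a))) * hq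
      calc (∫ s in Ioi (u^2), f s)
          ≤ Real.exp (-(c*u)) * ((2/(a-2)) * u ^ (2-a)) := by rw [← h3, ← h2]; exact h1
        _ = (2/(a-2)) * u ^ (2-a) * Real.exp (-(c*u)) := by ring
    calc Ltilde a u ≤ K * u ^ (2-a) * Real.exp (-(c*u))
          + (2/(a-2)) * u ^ (2-a) * Real.exp (-(c*u)) := by
          rw [hLsplit]; exact add_le_add hb1 hb2
      _ = D * u ^ (2-a) * Real.exp (-(c*u)) := by rw [hD_def]; ring
      _ ≤ max C₁ D * u ^ (2-a) * Real.exp (-(c*u)) := by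
          apply mul_le_mul_of_nonneg_right _ (Real.exp_pos _).le
          apply mul_le_mul_of_nonneg_right (le_max_right _ _) (by positivity)
end

section
/- For every c > 0 and every R > 1 there exists a constant C such that for all k ∈ (0, 1/2]: ∫_R^∞ (1 + |log(kr)|)²·e^{−2ckr}·(r·log r)^{−2}·r dr ≤ C·(log(1/k))³. -/
open MeasureTheory Real Set

lemma hasDerivAt_neg_inv_log (x : ℝ) (hx : 1 < x) :
    HasDerivAt (fun y => -(Real.log y)⁻¹) ((x * (Real.log x)^2)⁻¹) x := by
  have hx0 : x ≠ 0 := by positivity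
  have hlog : Real.log x ≠ 0 := ne_of_gt (Real.log_pos hx)
  have h1 : HasDerivAt Real.log x⁻¹ x := Real.hasDerivAt_log hx0
  have h2 := (h1.inv hlog).neg
  refine h2.congr_deriv ?_
  rw [neg_div, neg_neg, div_eq_mul_inv, mul_inv]

lemma integral_inv_mul_log_sq (R : ℝ) (hR : 1 < R) :
    ∫ r in Ioi R, (r * (Real.log r)^2)⁻¹ = (Real.log R)⁻¹ := by
  have hderiv : ∀ x ∈ Ici R, HasDerivAt (fun y => -(Real.log y)⁻¹)
      ((x * (Real.log x)^2)⁻¹) x := fun x hx =>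
    hasDerivAt_neg_inv_log x (lt_of_lt_of_le hR hx)
  have hpos : ∀ x ∈ Ioi R, 0 ≤ (x * (Real.log x)^2)⁻¹ := by
    intro x hx
    have : (0:ℝ) < x := lt_trans (by linarith) hx
    positivity
  have htend : Filter.Tendsto (fun y => -(Real.log y)⁻¹) Filter.atTop (nhds 0) := by
    have := (Real.tendsto_log_atTop).inv_tendsto_atTop
    simpa using this.neg
  rw [integral_Ioi_of_hasDerivAt_of_nonneg' hderiv hpos htend]
  simp

lemma integrableOn_inv_mul_log_sq (R : ℝ) (hR : 1 < R) :
    IntegrableOn (fun r => (r * (Real.log r)^2)⁻¹) (Ioi R) := by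
  have hderiv : ∀ x ∈ Ici R, HasDerivAt (fun y => -(Real.log y)⁻¹)
      ((x * (Real.log x)^2)⁻¹) x := fun x hx =>
    hasDerivAt_neg_inv_log x (lt_of_lt_of_le hR hx)
  have hpos : ∀ x ∈ Ioi R, 0 ≤ (x * (Real.log x)^2)⁻¹ := by
    intro x hx
    have : (0:ℝ) < x := lt_trans (by linarith) hx
    positivity
  have htend : Filter.Tendsto (fun y => -(Real.log y)⁻¹) Filter.atTop (nhds 0) := by
    have := (Real.tendsto_log_atTop).inv_tendsto_atTop
    simpa using this.neg
  exact integrableOn_Ioi_deriv_of_nonneg' hderiv hpos htend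

/-- Pointwise bound: `(1+|log x|)^2 exp(-2cx) ≤ 1 + 27/(2c³)` for `x > 1`. -/
lemma pointwise_exp_bound (c x : ℝ) (hc : 0 < c) (hx : 1 < x) :
    (1 + |Real.log x|)^2 * Real.exp (-(2 * c * x)) ≤ 1 + 27 / (2 * c^3) := by
  have hx0 : 0 < x := by linarith
  have hlog : |Real.log x| = Real.log x := abs_of_nonneg (Real.log_nonneg hx.le)
  have hlogle : Real.log x ≤ x - 1 := by
    have := Real.log_le_sub_one_of_pos hx0
    linarith
  have h1 : (1 + |Real.log x|)^2 ≤ 4 * x^2 := by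
    rw [hlog]
    nlinarith [Real.log_nonneg hx.le]
  have hexp : (2 * c * x / 3)^3 ≤ Real.exp (2 * c * x) := by
    have h3 : Real.exp (2 * c * x) = (Real.exp (2 * c * x / 3))^3 := by
      rw [← Real.exp_nat_mul]; ring_nf
    have hle : 2 * c * x / 3 ≤ Real.exp (2 * c * x / 3) := by
      have := Real.add_one_le_exp (2 * c * x / 3)
      linarith
    rw [h3]
    have hnn : (0:ℝ) ≤ 2 * c * x / 3 := by positivity
    exact pow_le_pow_left₀ hnn hle 3
  have hexppos : (0:ℝ) < Real.exp (2 * c * x) := Real.exp_pos _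
  have hcube : (0:ℝ) < (2 * c * x / 3)^3 := by positivity
  have h2 : Real.exp (-(2 * c * x)) ≤ ((2 * c * x / 3)^3)⁻¹ := by
    rw [Real.exp_neg]
    exact inv_anti₀ hcube hexp
  have h4 : (1 + |Real.log x|)^2 * Real.exp (-(2 * c * x)) ≤ 4 * x^2 * ((2 * c * x / 3)^3)⁻¹ := by
    apply mul_le_mul h1 h2 (Real.exp_nonneg _) (by positivity)
  have h5 : 4 * x^2 * ((2 * c * x / 3)^3)⁻¹ = 27 / (2 * c^3 * x) := by
    field_simp
    ring
  rw [h5] at h4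
  have h6 : 27 / (2 * c^3 * x) ≤ 27 / (2 * c^3) := by
    apply div_le_div_of_nonneg_left (by norm_num) (by positivity)
    nlinarith [pow_pos hc 3]
  linarith

/-- For `c > 0` and `R > 1` there is `C` so that for all `k ∈ (0, 1/2]`:
`∫_R^∞ (1 + |log(kr)|)² e^{-2ckr} (r log r)^{-2} r dr ≤ C (log(1/k))³`. -/
theorem log_weight_integral_bound (c R : ℝ) (hc : 0 < c) (hR : 1 < R) :
    ∃ C : ℝ, ∀ k : ℝ, k ∈ Ioc (0:ℝ) (1/2) →
      (∫ r in Ioi R,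
          (1 + |Real.log (k * r)|)^2 * Real.exp (-(2 * c * k * r)) *
            ((r * Real.log r)^2)⁻¹ * r)
        ≤ C * (Real.log (1/k))^3 := by
  set B : ℝ := 1 + 27 / (2 * c^3) with hB
  have hBpos : 0 < B := by positivity
  have hlog2 : (0:ℝ) < Real.log 2 := Real.log_pos (by norm_num)
  have hlogR : (0:ℝ) < Real.log R := Real.log_pos hR
  refine ⟨B * (1 + 1/Real.log 2)^2 * (Real.log 2)⁻¹ * (Real.log R)⁻¹, ?_⟩
  intro k hk
  obtain ⟨hk0, hk2⟩ := hk
  set L : ℝ := Real.log (1/k) with hL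
  have hLlog2 : Real.log 2 ≤ L := by
    rw [hL]
    apply Real.log_le_log (by norm_num)
    rw [le_div_iff₀ hk0]
    linarith
  have hLpos : 0 < L := lt_of_lt_of_le hlog2 hLlog2
  -- pointwise bound of the integrand
  have hbound : ∀ r ∈ Ioi R,
      (1 + |Real.log (k * r)|)^2 * Real.exp (-(2 * c * k * r)) *
        ((r * Real.log r)^2)⁻¹ * r
      ≤ B * (1 + L)^2 * (r * (Real.log r)^2)⁻¹ := by
    intro r hr
    have hrR : R < r := hr
    have hr1 : 1 < r := lt_trans hR hrR
    have hr0 : 0 < r := by linarith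
    have hlogr : 0 < Real.log r := Real.log_pos hr1
    have hrw : ((r * Real.log r)^2)⁻¹ * r = (r * (Real.log r)^2)⁻¹ := by
      field_simp
    have key : (1 + |Real.log (k * r)|)^2 * Real.exp (-(2 * c * k * r)) ≤ B * (1 + L)^2 := by
      rcases le_or_gt (k * r) 1 with hkr | hkr
      · -- k*r ≤ 1 : |log(kr)| ≤ L
        have hkr0 : 0 < k * r := by positivity
        have hlogkr : Real.log (k * r) ≤ 0 := Real.log_nonpos hkr0.le hkr
        have habs : |Real.log (k * r)| = -(Real.log (k * r)) := abs_of_nonpos hlogkr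
        have hsplit : Real.log (k * r) = Real.log k + Real.log r :=
          Real.log_mul (ne_of_gt hk0) (ne_of_gt hr0)
        have hLk : L = -Real.log k := by
          rw [hL, one_div, Real.log_inv]
        have h1 : 1 + |Real.log (k * r)| ≤ 1 + L := by
          rw [habs, hsplit, hLk]; linarith
        have h2 : (1 + |Real.log (k * r)|)^2 ≤ (1 + L)^2 := by
          apply pow_le_pow_left₀ (by positivity) h1
        have h3 : Real.exp (-(2 * c * k * r)) ≤ 1 := by
          rw [Real.exp_le_one_iff]
          nlinarith
        calc (1 + |Real.log (k * r)|)^2 * Real.exp (-(2 * c * k * r))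
            ≤ (1 + L)^2 * 1 := mul_le_mul h2 h3 (Real.exp_nonneg _) (by positivity)
          _ = 1 * (1 + L)^2 := by ring
          _ ≤ B * (1 + L)^2 := by
              apply mul_le_mul_of_nonneg_right _ (by positivity)
              have h27 : (0:ℝ) ≤ 27 / (2 * c^3) := by positivity
              rw [hB]; linarith
      · -- k*r > 1 : use the exponential decay bound
        have := pointwise_exp_bound c (k * r) hc hkr
        have hexp_eq : Real.exp (-(2 * c * k * r)) = Real.exp (-(2 * c * (k * r))) := by
          ring_nf
        rw [hexp_eq]
        calc (1 + |Real.log (k * r)|)^2 * Real.exp (-(2 * c * (k * r)))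
            ≤ B := this
          _ = B * 1 := by ring
          _ ≤ B * (1 + L)^2 := by
              apply mul_le_mul_of_nonneg_left _ hBpos.le
              nlinarith
    calc (1 + |Real.log (k * r)|)^2 * Real.exp (-(2 * c * k * r)) *
          ((r * Real.log r)^2)⁻¹ * r
        = (1 + |Real.log (k * r)|)^2 * Real.exp (-(2 * c * k * r)) *
          (r * (Real.log r)^2)⁻¹ := by rw [mul_assoc _ _ r, hrw]
      _ ≤ B * (1 + L)^2 * (r * (Real.log r)^2)⁻¹ := by
          apply mul_le_mul_of_nonneg_right key
          positivity
  -- integrability of the majorant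
  have hint : IntegrableOn (fun r => B * (1 + L)^2 * (r * (Real.log r)^2)⁻¹) (Ioi R) :=
    (integrableOn_inv_mul_log_sq R hR).const_mul _
  -- nonnegativity of integrand a.e.
  have hmeas : MeasurableSet (Ioi R) := measurableSet_Ioi
  have hnonneg : (0:ℝ → ℝ) ≤ᵐ[volume.restrict (Ioi R)]
      (fun r => (1 + |Real.log (k * r)|)^2 * Real.exp (-(2 * c * k * r)) *
        ((r * Real.log r)^2)⁻¹ * r) := by
    rw [Filter.EventuallyLE, ae_restrict_iff' hmeas]
    filter_upwards with r hr
    have hr0 : (0:ℝ) < r := lt_trans (by linarith) hr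
    have : (0:ℝ) ≤ (1 + |Real.log (k * r)|)^2 * Real.exp (-(2 * c * k * r)) *
        ((r * Real.log r)^2)⁻¹ * r := by positivity
    simpa using this
  have hle : (fun r => (1 + |Real.log (k * r)|)^2 * Real.exp (-(2 * c * k * r)) *
        ((r * Real.log r)^2)⁻¹ * r)
      ≤ᵐ[volume.restrict (Ioi R)]
      (fun r => B * (1 + L)^2 * (r * (Real.log r)^2)⁻¹) := by
    rw [Filter.EventuallyLE, ae_restrict_iff' hmeas]
    filter_upwards with r hr
    exact hbound r hr
  have hmono := integral_mono_of_nonneg hnonneg hint hle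
  have hval : ∫ r in Ioi R, B * (1 + L)^2 * (r * (Real.log r)^2)⁻¹
      = B * (1 + L)^2 * (Real.log R)⁻¹ := by
    rw [integral_const_mul, integral_inv_mul_log_sq R hR]
  rw [hval] at hmono
  refine le_trans hmono ?_
  -- final arithmetic: B (1+L)² (log R)⁻¹ ≤ C L³
  have h1L : 1 + L ≤ (1 + 1/Real.log 2) * L := by
    have : 1 ≤ L / Real.log 2 := (one_le_div hlog2).mpr hLlog2
    have h := mul_le_mul_of_nonneg_left this (le_of_lt hLpos)
    calc 1 + L ≤ L / Real.log 2 + L := by linarith [(one_le_div hlog2).mpr hLlog2]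
      _ = (1 + 1/Real.log 2) * L := by field_simp; ring
  have h1Lsq : (1 + L)^2 ≤ ((1 + 1/Real.log 2) * L)^2 :=
    pow_le_pow_left₀ (by positivity) h1L 2
  have hL3 : L^2 ≤ L^3 / Real.log 2 := by
    rw [le_div_iff₀ hlog2]
    calc L^2 * Real.log 2 ≤ L^2 * L := by nlinarith
      _ = L^3 := by ring
  have ha : (0:ℝ) < 1 + 1/Real.log 2 := by positivity
  calc B * (1 + L)^2 * (Real.log R)⁻¹
      ≤ B * ((1 + 1/Real.log 2)^2 * L^2) * (Real.log R)⁻¹ := by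
        apply mul_le_mul_of_nonneg_right _ (by positivity)
        apply mul_le_mul_of_nonneg_left _ hBpos.le
        calc (1 + L)^2 ≤ ((1 + 1/Real.log 2) * L)^2 := h1Lsq
          _ = (1 + 1/Real.log 2)^2 * L^2 := by ring
    _ ≤ B * ((1 + 1/Real.log 2)^2 * (L^3 / Real.log 2)) * (Real.log R)⁻¹ := by
        apply mul_le_mul_of_nonneg_right _ (by positivity)
        apply mul_le_mul_of_nonneg_left _ hBpos.le
        exact mul_le_mul_of_nonneg_left hL3 (by positivity)
    _ = B * (1 + 1/Real.log 2)^2 * (Real.log 2)⁻¹ * (Real.log R)⁻¹ * L^3 := by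
        field_simp
end
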